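/- arXiv:2510.14910 — 2 statements merged into one kernel-verified Lean document; each statement's English description precedes it below -/
import Mathlib

section
/- Fix ρ > 0 and define R, Z : ℝ² → ℝ by R(x,z) = ρ·x(1+z²)/(1+x²z²) and Z(x,z) = ρ·z(1−x²)/(1+x²z²). Then at every point (x,z) (with 1 + x²z² ≠ 0, which always holds): (i) (∂ₓR)² + (∂ₓZ)² = ρ²(1+z²)²/(1+x²z²)²; (ii) (∂_zR)² + (∂_zZ)² = ρ²(1−x²)²/(1+x²z²)²; (iii) ∂ₓR·∂_zR + ∂ₓZ·∂_zZ = 0. -/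
/-- The Moebius-type tube coordinates on the ball: with
R(x,z) = ρ·x(1+z²)/(1+x²z²) and Z(x,z) = ρ·z(1−x²)/(1+x²z²), the pullback of the flat
metric dR² + dZ² is (ρ²/(1+x²z²)²)((1+z²)²dx² + (1−x²)²dz²): the coordinate vector
fields are orthogonal with explicit conformal factors. -/
theorem stmt_10 (ρ : ℝ) (hρ : 0 < ρ) (R Z : ℝ → ℝ → ℝ)
    (hR : ∀ x z, R x z = ρ * x * (1 + z ^ 2) / (1 + x ^ 2 * z ^ 2))
    (hZ : ∀ x z, Z x z = ρ * z * (1 - x ^ 2) / (1 + x ^ 2 * z ^ 2)) (x z : ℝ) :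
    ((deriv (fun t => R t z) x) ^ 2 + (deriv (fun t => Z t z) x) ^ 2
        = ρ ^ 2 * (1 + z ^ 2) ^ 2 / (1 + x ^ 2 * z ^ 2) ^ 2) ∧
    ((deriv (fun t => R x t) z) ^ 2 + (deriv (fun t => Z x t) z) ^ 2
        = ρ ^ 2 * (1 - x ^ 2) ^ 2 / (1 + x ^ 2 * z ^ 2) ^ 2) ∧
    (deriv (fun t => R t z) x * deriv (fun t => R x t) z
        + deriv (fun t => Z t z) x * deriv (fun t => Z x t) z = 0) := by
  have hD : (1 + x ^ 2 * z ^ 2) ≠ 0 := by positivity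
  -- derivatives of denominators
  have hd1 : HasDerivAt (fun t : ℝ => 1 + t ^ 2 * z ^ 2) (2 * x * z ^ 2) x := by
    have h := ((hasDerivAt_pow 2 x).mul_const (z ^ 2)).const_add 1
    refine h.congr_deriv ?_; push_cast; ring
  have hd2 : HasDerivAt (fun t : ℝ => 1 + x ^ 2 * t ^ 2) (x ^ 2 * (2 * z)) z := by
    have h := ((hasDerivAt_pow 2 z).const_mul (x ^ 2)).const_add 1
    refine h.congr_deriv ?_; push_cast; ring
  -- derivatives of numerators
  have hn1 : HasDerivAt (fun t : ℝ => ρ * t * (1 + z ^ 2)) (ρ * (1 + z ^ 2)) x := by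
    have h := ((hasDerivAt_id x).const_mul ρ).mul_const (1 + z ^ 2)
    refine h.congr_deriv ?_; ring
  have hn2 : HasDerivAt (fun t : ℝ => ρ * x * (1 + t ^ 2)) (ρ * x * (2 * z)) z := by
    have h := ((hasDerivAt_pow 2 z).const_add 1).const_mul (ρ * x)
    refine h.congr_deriv ?_; push_cast; ring
  have hn3 : HasDerivAt (fun t : ℝ => ρ * t * (1 - x ^ 2)) (ρ * (1 - x ^ 2)) z := by
    have h := ((hasDerivAt_id z).const_mul ρ).mul_const (1 - x ^ 2)
    refine h.congr_deriv ?_; ring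
  have hn4 : HasDerivAt (fun t : ℝ => ρ * z * (1 - t ^ 2)) (ρ * z * (-(2 * x))) x := by
    have h := ((hasDerivAt_pow 2 x).const_sub 1).const_mul (ρ * z)
    refine h.congr_deriv ?_; push_cast; ring
  have e1 : deriv (fun t => R t z) x
      = (ρ * (1 + z ^ 2) * (1 + x ^ 2 * z ^ 2) - ρ * x * (1 + z ^ 2) * (2 * x * z ^ 2))
        / (1 + x ^ 2 * z ^ 2) ^ 2 := by
    simp only [hR]; exact (hn1.div hd1 hD).deriv
  have e2 : deriv (fun t => R x t) z
      = (ρ * x * (2 * z) * (1 + x ^ 2 * z ^ 2) - ρ * x * (1 + z ^ 2) * (x ^ 2 * (2 * z)))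
        / (1 + x ^ 2 * z ^ 2) ^ 2 := by
    simp only [hR]; exact (hn2.div hd2 hD).deriv
  have e3 : deriv (fun t => Z t z) x
      = (ρ * z * (-(2 * x)) * (1 + x ^ 2 * z ^ 2) - ρ * z * (1 - x ^ 2) * (2 * x * z ^ 2))
        / (1 + x ^ 2 * z ^ 2) ^ 2 := by
    simp only [hZ]; exact (hn4.div hd1 hD).deriv
  have e4 : deriv (fun t => Z x t) z
      = (ρ * (1 - x ^ 2) * (1 + x ^ 2 * z ^ 2) - ρ * z * (1 - x ^ 2) * (x ^ 2 * (2 * z)))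
        / (1 + x ^ 2 * z ^ 2) ^ 2 := by
    simp only [hZ]; exact (hn3.div hd2 hD).deriv
  refine ⟨?_, ?_, ?_⟩ <;> simp only [e1, e2, e3, e4] <;> field_simp <;> ring
end

section
/- Let n ≥ 1, L > 0. Let γ₀ : [0,L] → ℝⁿ and w : [0,L] → ℝⁿ be C¹ with w(0) = 0 and w(L) = 0, and let X : ℝⁿ → ℝⁿ be C¹ with ‖X(p)‖ ≤ 1 and ‖DX(p)‖ ≤ 1 (operator norm) for all p. Then |∫₀^L X(γ₀(t)+w(t))·(γ₀'(t)+w'(t)) dt − ∫₀^L X(γ₀(t))·γ₀'(t) dt| ≤ (sup_{t∈[0,L]} ‖w(t)‖) · (∫₀^L ‖γ₀'(t)+w'(t)‖ dt + ∫₀^L ‖γ₀'(t)‖ dt). -/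
open scoped RealInnerProductSpace

/-- Action of a C¹ vector field (bounded with bounded derivative) on a perturbed curve:
if the perturbation w vanishes at the endpoints, the difference of actions is bounded by
‖w‖_∞ times the sum of the lengths of the two curves. -/
theorem stmt_15 (n : ℕ) (hn : 1 ≤ n) (L : ℝ) (hL : 0 < L)
    (γ₀ w : ℝ → EuclideanSpace ℝ (Fin n))
    (hγ : ContDiff ℝ 1 γ₀) (hw : ContDiff ℝ 1 w)
    (hw0 : w 0 = 0) (hwL : w L = 0)
    (X : EuclideanSpace ℝ (Fin n) → EuclideanSpace ℝ (Fin n))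
    (hX : ContDiff ℝ 1 X) (hXb : ∀ p, ‖X p‖ ≤ 1) (hDX : ∀ p, ‖fderiv ℝ X p‖ ≤ 1) :
    |(∫ t in (0 : ℝ)..L, ⟪X (γ₀ t + w t), deriv γ₀ t + deriv w t⟫)
        - ∫ t in (0 : ℝ)..L, ⟪X (γ₀ t), deriv γ₀ t⟫|
      ≤ (⨆ t : Set.Icc (0 : ℝ) L, ‖w (t : ℝ)‖) *
          ((∫ t in (0 : ℝ)..L, ‖deriv γ₀ t + deriv w t‖)
            + ∫ t in (0 : ℝ)..L, ‖deriv γ₀ t‖) := by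
  have hL' : (0:ℝ) ≤ L := hL.le
  have hγd : Differentiable ℝ γ₀ := hγ.differentiable one_ne_zero
  have hwd : Differentiable ℝ w := hw.differentiable one_ne_zero
  have hXd : Differentiable ℝ X := hX.differentiable one_ne_zero
  have hγ' : Continuous (deriv γ₀) := hγ.continuous_deriv le_rfl
  have hw' : Continuous (deriv w) := hw.continuous_deriv le_rfl
  have hXf : Continuous (fderiv ℝ X) := hX.continuous_fderiv one_ne_zero
  set M : ℝ := ⨆ t : Set.Icc (0 : ℝ) L, ‖w (t : ℝ)‖ with hMdef
  have hbdd : BddAbove (Set.range fun t : Set.Icc (0:ℝ) L => ‖w (t:ℝ)‖) := by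
    have hbdd := ((isCompact_Icc.image (continuous_norm.comp hwd.continuous) :
      IsCompact ((fun t => ‖w t‖) '' Set.Icc (0:ℝ) L))).bddAbove
    rwa [Set.image_eq_range] at hbdd
  have hM : ∀ t ∈ Set.Icc (0:ℝ) L, ‖w t‖ ≤ M := fun t ht => le_ciSup hbdd ⟨t, ht⟩
  -- Lipschitz bound for X
  have hlip : ∀ a b : EuclideanSpace ℝ (Fin n), ‖X a - X b‖ ≤ ‖a - b‖ := by
    intro a b
    have := convex_univ.norm_image_sub_le_of_norm_fderiv_le
      (fun x _ => hXd x) (fun x _ => hDX x) (Set.mem_univ b) (Set.mem_univ a)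
    simpa using this
  -- derivative of the inner product ⟪X ∘ γ₀, w⟫
  have key : ∀ t : ℝ, HasDerivAt (fun s => ⟪X (γ₀ s), w s⟫)
      (⟪X (γ₀ t), deriv w t⟫ + ⟪(fderiv ℝ X (γ₀ t)) (deriv γ₀ t), w t⟫) t := by
    intro t
    have h1 : HasDerivAt (fun s => X (γ₀ s)) ((fderiv ℝ X (γ₀ t)) (deriv γ₀ t)) t :=
      (hXd (γ₀ t)).hasFDerivAt.comp_hasDerivAt t (hγd t).hasDerivAt
    exact h1.inner ℝ (hwd t).hasDerivAt
  have hcXγ : Continuous fun t => X (γ₀ t) := hXd.continuous.comp hγd.continuous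
  have hcD : Continuous fun t => (fderiv ℝ X (γ₀ t)) (deriv γ₀ t) :=
    (hXf.comp hγd.continuous).clm_apply hγ'
  have hcF' : Continuous fun t =>
      ⟪X (γ₀ t), deriv w t⟫ + ⟪(fderiv ℝ X (γ₀ t)) (deriv γ₀ t), w t⟫ :=
    (hcXγ.inner hw').add (hcD.inner hwd.continuous)
  have ibp : (∫ t in (0:ℝ)..L,
      (⟪X (γ₀ t), deriv w t⟫ + ⟪(fderiv ℝ X (γ₀ t)) (deriv γ₀ t), w t⟫)) = 0 := by
    rw [intervalIntegral.integral_eq_sub_of_hasDerivAt (fun t _ => key t)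
      (hcF'.intervalIntegrable 0 L)]
    simp [hw0, hwL]
  -- integrands
  set f : ℝ → ℝ := fun t => ⟪X (γ₀ t + w t) - X (γ₀ t), deriv γ₀ t + deriv w t⟫
      - ⟪(fderiv ℝ X (γ₀ t)) (deriv γ₀ t), w t⟫ with hfdef
  have hcf : Continuous f :=
    (((hXd.continuous.comp (hγd.continuous.add hwd.continuous)).sub hcXγ).inner
      (hγ'.add hw')).sub (hcD.inner hwd.continuous)
  have split : (∫ t in (0 : ℝ)..L, ⟪X (γ₀ t + w t), deriv γ₀ t + deriv w t⟫)
      - ∫ t in (0 : ℝ)..L, ⟪X (γ₀ t), deriv γ₀ t⟫ = ∫ t in (0:ℝ)..L, f t := by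
    have expand : ∀ t, ⟪X (γ₀ t + w t), deriv γ₀ t + deriv w t⟫
        = f t + (⟪X (γ₀ t), deriv w t⟫ + ⟪(fderiv ℝ X (γ₀ t)) (deriv γ₀ t), w t⟫)
          + ⟪X (γ₀ t), deriv γ₀ t⟫ := by
      intro t
      simp only [hfdef, inner_sub_left, inner_add_right]
      ring
    have hI1 : Continuous fun t => ⟪X (γ₀ t), deriv γ₀ t⟫ := hcXγ.inner hγ'
    calc (∫ t in (0 : ℝ)..L, ⟪X (γ₀ t + w t), deriv γ₀ t + deriv w t⟫)
          - ∫ t in (0 : ℝ)..L, ⟪X (γ₀ t), deriv γ₀ t⟫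
        = (∫ t in (0:ℝ)..L, (f t
            + (⟪X (γ₀ t), deriv w t⟫ + ⟪(fderiv ℝ X (γ₀ t)) (deriv γ₀ t), w t⟫)
            + ⟪X (γ₀ t), deriv γ₀ t⟫))
          - ∫ t in (0 : ℝ)..L, ⟪X (γ₀ t), deriv γ₀ t⟫ := by
          congr 1
          exact intervalIntegral.integral_congr fun t _ => expand t
      _ = ∫ t in (0:ℝ)..L, f t := by
          rw [intervalIntegral.integral_add (f := fun t => f t
              + (⟪X (γ₀ t), deriv w t⟫ + ⟪(fderiv ℝ X (γ₀ t)) (deriv γ₀ t), w t⟫))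
            (g := fun t => ⟪X (γ₀ t), deriv γ₀ t⟫) ((hcf.add hcF').intervalIntegrable 0 L)
            (hI1.intervalIntegrable 0 L),
            intervalIntegral.integral_add (hcf.intervalIntegrable 0 L)
            (hcF'.intervalIntegrable 0 L), ibp]
          ring
  rw [split]
  -- pointwise bound
  have hpt : ∀ t ∈ Set.Icc (0:ℝ) L,
      |f t| ≤ M * ‖deriv γ₀ t + deriv w t‖ + M * ‖deriv γ₀ t‖ := by
    intro t ht
    have h1 : |⟪X (γ₀ t + w t) - X (γ₀ t), deriv γ₀ t + deriv w t⟫|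
        ≤ M * ‖deriv γ₀ t + deriv w t‖ := by
      refine (abs_real_inner_le_norm _ _).trans ?_
      gcongr
      calc ‖X (γ₀ t + w t) - X (γ₀ t)‖ ≤ ‖γ₀ t + w t - γ₀ t‖ := hlip _ _
        _ = ‖w t‖ := by congr 1; abel
        _ ≤ M := hM t ht
    have h2 : |⟪(fderiv ℝ X (γ₀ t)) (deriv γ₀ t), w t⟫| ≤ ‖deriv γ₀ t‖ * M := by
      refine (abs_real_inner_le_norm _ _).trans ?_
      have := (fderiv ℝ X (γ₀ t)).le_opNorm (deriv γ₀ t)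
      have h3 : ‖(fderiv ℝ X (γ₀ t)) (deriv γ₀ t)‖ ≤ ‖deriv γ₀ t‖ :=
        this.trans (by nlinarith [hDX (γ₀ t), norm_nonneg (deriv γ₀ t)])
      exact mul_le_mul h3 (hM t ht) (norm_nonneg _) (norm_nonneg _)
    calc |f t| ≤ |⟪X (γ₀ t + w t) - X (γ₀ t), deriv γ₀ t + deriv w t⟫|
          + |⟪(fderiv ℝ X (γ₀ t)) (deriv γ₀ t), w t⟫| := abs_sub _ _
      _ ≤ M * ‖deriv γ₀ t + deriv w t‖ + M * ‖deriv γ₀ t‖ := by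
          refine add_le_add h1 ?_
          linarith [h2]
  have hM0 : 0 ≤ M := le_trans (norm_nonneg _) (hM 0 ⟨le_rfl, hL'⟩)
  calc |∫ t in (0:ℝ)..L, f t| ≤ ∫ t in (0:ℝ)..L, |f t| :=
        intervalIntegral.abs_integral_le_integral_abs hL'
    _ ≤ ∫ t in (0:ℝ)..L, (M * ‖deriv γ₀ t + deriv w t‖ + M * ‖deriv γ₀ t‖) := by
        apply intervalIntegral.integral_mono_on hL'
          (hcf.abs.intervalIntegrable 0 L)
          (((continuous_const.mul (hγ'.add hw').norm).add
            (continuous_const.mul hγ'.norm)).intervalIntegrable 0 L)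
        exact hpt
    _ = M * ((∫ t in (0:ℝ)..L, ‖deriv γ₀ t + deriv w t‖)
          + ∫ t in (0:ℝ)..L, ‖deriv γ₀ t‖) := by
        rw [intervalIntegral.integral_add (f := fun t => M * ‖deriv γ₀ t + deriv w t‖)
          (g := fun t => M * ‖deriv γ₀ t‖)
          ((continuous_const.mul (hγ'.add hw').norm).intervalIntegrable 0 L)
          ((continuous_const.mul hγ'.norm).intervalIntegrable 0 L),
          intervalIntegral.integral_const_mul, intervalIntegral.integral_const_mul]
        ring
end
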